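/- For every initial distribution p on ℝ with ∫ w dp < ∞ and every threshold z ∈ ℝ: F(p,z) − F(p,z⁻) = −f(z,z⁻)·μ_p^z{z} = −f(z,z)·μ_p^{z⁻}{z}, and G(p,z) − G(p,z⁻) = −g(z,z⁻)·μ_p^z{z} = −g(z,z)·μ_p^{z⁻}{z}. -/

import Mathlib

open MeasureTheory ProbabilityTheory Filter Topology Set

noncomputable section

/-- A restless bandit project: the model data (discount factor `β`, passive/active
Markov transition kernels `κ false`/`κ true`, reward `r` and resource consumption `c`),
Assumption 1 (the weighted sup-norm conditions for weight `w` and constants `M`, `γ`),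
together with the threshold-policy performance metrics `F`, `G` (for `z`-policies,
active iff `x > z`), `Fm`, `Gm` (for `z⁻`-policies, active iff `x ≥ z`), and the
optimal value function `V lam` of the `lam`-price problem, each of which is the
(unique) `w`-bounded measurable solution of its fixed-point equation. -/
structure Bandit where
  β : ℝ
  κ : Bool → Kernel ℝ ℝ
  r : ℝ → Bool → ℝ
  c : ℝ → Bool → ℝ
  w : ℝ → ℝ
  M : ℝ
  γ : ℝ
  F : ℝ → EReal → ℝ
  G : ℝ → EReal → ℝ
  Fm : ℝ → EReal → ℝ
  Gm : ℝ → EReal → ℝ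
  V : ℝ → ℝ → ℝ
  hβ0 : 0 ≤ β
  hβ1 : β < 1
  hκ : ∀ a, IsMarkovKernel (κ a)
  hr_cont : ∀ a, Continuous fun x => r x a
  hc_cont : ∀ a, Continuous fun x => c x a
  hc0 : ∀ x, 0 ≤ c x false
  hc01 : ∀ x, c x false < c x true
  hw_meas : Measurable w
  hw_one : ∀ x, 1 ≤ w x
  hM : 0 < M
  hβγ : β ≤ γ
  hγ1 : γ < 1
  hr_bd : ∀ x a, |r x a| ≤ M * w x
  hc_bd : ∀ x a, c x a ≤ M * w x
  hw_int : ∀ a x, Integrable w (κ a x)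
  hw_drift : ∀ a x, β * ∫ y, w y ∂(κ a x) ≤ γ * w x
  hF_meas : ∀ z, Measurable fun x => F x z
  hG_meas : ∀ z, Measurable fun x => G x z
  hFm_meas : ∀ z, Measurable fun x => Fm x z
  hGm_meas : ∀ z, Measurable fun x => Gm x z
  hV_meas : ∀ lam, Measurable (V lam)
  hF_bdd : ∀ z, ∃ C, ∀ x, |F x z| ≤ C * w x
  hG_bdd : ∀ z, ∃ C, ∀ x, |G x z| ≤ C * w x
  hFm_bdd : ∀ z, ∃ C, ∀ x, |Fm x z| ≤ C * w x
  hGm_bdd : ∀ z, ∃ C, ∀ x, |Gm x z| ≤ C * w x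
  hV_bdd : ∀ lam, ∃ C, ∀ x, |V lam x| ≤ C * w x
  hF_eq : ∀ x z, F x z =
    r x (decide (z < (x : EReal))) +
      β * ∫ y, F y z ∂(κ (decide (z < (x : EReal))) x)
  hG_eq : ∀ x z, G x z =
    c x (decide (z < (x : EReal))) +
      β * ∫ y, G y z ∂(κ (decide (z < (x : EReal))) x)
  hFm_eq : ∀ x z, Fm x z =
    r x (decide (z ≤ (x : EReal))) +
      β * ∫ y, Fm y z ∂(κ (decide (z ≤ (x : EReal))) x)
  hGm_eq : ∀ x z, Gm x z =
    c x (decide (z ≤ (x : EReal))) +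
      β * ∫ y, Gm y z ∂(κ (decide (z ≤ (x : EReal))) x)
  hV_eq : ∀ lam x, V lam x =
    max (r x false - lam * c x false + β * ∫ y, V lam y ∂(κ false x))
        (r x true - lam * c x true + β * ∫ y, V lam y ∂(κ true x))

/-- `ν` is the Lebesgue–Stieltjes measure of the (bounded nonincreasing
right-continuous) function `h`: `ν(z₁,z₂] = h z₁ - h z₂`. -/
def IsLSMeasureOfAnti (h : ℝ → ℝ) (ν : Measure ℝ) : Prop :=
  ∀ z₁ z₂ : ℝ, z₁ ≤ z₂ → ν (Set.Ioc z₁ z₂) = ENNReal.ofReal (h z₁ - h z₂)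

/-- `ν` is the Lebesgue–Stieltjes measure of the (bounded nondecreasing
right-continuous) function `h`: `ν(z₁,z₂] = h z₂ - h z₁`. -/
def IsLSMeasureOfMono (h : ℝ → ℝ) (ν : Measure ℝ) : Prop :=
  ∀ z₁ z₂ : ℝ, z₁ ≤ z₂ → ν (Set.Ioc z₁ z₂) = ENNReal.ofReal (h z₂ - h z₁)

/-- The real interval `(z₁, z₂] ⊆ ℝ` with extended-real endpoints. -/
def iocR (z₁ z₂ : EReal) : Set ℝ := {y : ℝ | z₁ < (y : EReal) ∧ (y : EReal) ≤ z₂}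

/-- `t`-step distribution of the Markov chain with kernel `κ` and initial law `p`. -/
def kerIter (κ : Kernel ℝ ℝ) : ℕ → Measure ℝ → Measure ℝ
  | 0, p => p
  | (t + 1), p => (kerIter κ t p).bind fun x => κ x

namespace Bandit

variable (P : Bandit)

/-- Marginal reward metric `f(x,z)` of the `z`-policy. -/
def f (x : ℝ) (z : EReal) : ℝ :=
  (P.r x true - P.r x false) +
    P.β * ((∫ y, P.F y z ∂(P.κ true x)) - ∫ y, P.F y z ∂(P.κ false x))

/-- Marginal resource metric `g(x,z)` of the `z`-policy. -/
def g (x : ℝ) (z : EReal) : ℝ :=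
  (P.c x true - P.c x false) +
    P.β * ((∫ y, P.G y z ∂(P.κ true x)) - ∫ y, P.G y z ∂(P.κ false x))

/-- Marginal reward metric `f(x,z⁻)` of the `z⁻`-policy. -/
def fm (x : ℝ) (z : EReal) : ℝ :=
  (P.r x true - P.r x false) +
    P.β * ((∫ y, P.Fm y z ∂(P.κ true x)) - ∫ y, P.Fm y z ∂(P.κ false x))

/-- Marginal resource metric `g(x,z⁻)` of the `z⁻`-policy. -/
def gm (x : ℝ) (z : EReal) : ℝ :=
  (P.c x true - P.c x false) +
    P.β * ((∫ y, P.Gm y z ∂(P.κ true x)) - ∫ y, P.Gm y z ∂(P.κ false x))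

/-- Marginal productivity metric `m(x,z) = f(x,z)/g(x,z)`. -/
def m (x : ℝ) (z : EReal) : ℝ := P.f x z / P.g x z

/-- Marginal productivity metric `m(x,z⁻) = f(x,z⁻)/g(x,z⁻)`. -/
def mm (x : ℝ) (z : EReal) : ℝ := P.fm x z / P.gm x z

/-- The marginal productivity (MP) index `m*(x) = m(x,x)`. -/
def mStar (x : ℝ) : ℝ := P.m x (x : EReal)

/-- The active action is `P_lam`-optimal at `x`. -/
def ActOpt (lam x : ℝ) : Prop :=
  P.r x false - lam * P.c x false + P.β * ∫ y, P.V lam y ∂(P.κ false x) ≤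
    P.r x true - lam * P.c x true + P.β * ∫ y, P.V lam y ∂(P.κ true x)

/-- The passive action is `P_lam`-optimal at `x`. -/
def PassOpt (lam x : ℝ) : Prop :=
  P.r x true - lam * P.c x true + P.β * ∫ y, P.V lam y ∂(P.κ true x) ≤
    P.r x false - lam * P.c x false + P.β * ∫ y, P.V lam y ∂(P.κ false x)

/-- The project is indexable with index `ν`. -/
def Indexable (ν : ℝ → ℝ) : Prop :=
  ∀ lam x, (P.ActOpt lam x ↔ lam ≤ ν x) ∧ (P.PassOpt lam x ↔ ν x ≤ lam)

/-- The `z`-policy is `P_lam`-optimal. -/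
def ZPolicyOpt (z : EReal) (lam : ℝ) : Prop :=
  ∀ x, P.F x z - lam * P.G x z = P.V lam x

/-- The `z⁻`-policy is `P_lam`-optimal. -/
def ZmPolicyOpt (z : EReal) (lam : ℝ) : Prop :=
  ∀ x, P.Fm x z - lam * P.Gm x z = P.V lam x

/-- The project is strongly threshold-indexable with index `ν`. -/
def StronglyThresholdIndexable (ν : ℝ → ℝ) : Prop :=
  P.Indexable ν ∧
    ∀ lam : ℝ, ∃ z : EReal, P.ZPolicyOpt z lam ∧ P.ZmPolicyOpt z lam

/-- PCL-indexability condition (PCLI1). -/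
def PCLI1 : Prop := ∀ (x : ℝ) (z : EReal), 0 < P.g x z

/-- PCL-indexability condition (PCLI2). -/
def PCLI2 : Prop :=
  Monotone P.mStar ∧ Continuous P.mStar ∧ BddBelow (Set.range P.mStar)

/-- PCL-indexability condition (PCLI3). -/
def PCLI3 : Prop :=
  ∀ x : ℝ, ∀ ν : Measure ℝ, IsLSMeasureOfAnti (fun z : ℝ => P.G x z) ν →
    ∀ z₁ z₂ : ℝ, z₁ < z₂ →
      P.F x z₂ - P.F x z₁ = -∫ z in Set.Ioc z₁ z₂, P.mStar z ∂ν

/-- The project is PCL-indexable. -/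
def PCLIndexable : Prop := P.PCLI1 ∧ P.PCLI2 ∧ P.PCLI3

/-- Reward metric with initial distribution `p`. -/
def Fp (p : Measure ℝ) (z : EReal) : ℝ := ∫ x, P.F x z ∂p

/-- Resource metric with initial distribution `p`. -/
def Gp (p : Measure ℝ) (z : EReal) : ℝ := ∫ x, P.G x z ∂p

/-- `z⁻`-policy reward metric with initial distribution `p`. -/
def Fmp (p : Measure ℝ) (z : EReal) : ℝ := ∫ x, P.Fm x z ∂p

/-- `z⁻`-policy resource metric with initial distribution `p`. -/
def Gmp (p : Measure ℝ) (z : EReal) : ℝ := ∫ x, P.Gm x z ∂p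

/-- An admissible initial distribution: a probability measure with `∫ w dp < ∞`. -/
def IsInitDist (p : Measure ℝ) : Prop :=
  IsProbabilityMeasure p ∧ Integrable P.w p

/-- The transition kernel of the `z`-policy (active iff `x > z`). -/
def thrKer (z : EReal) : Kernel ℝ ℝ :=
  haveI : DecidablePred (· ∈ {x : ℝ | z < (x : EReal)}) := Classical.decPred _
  Kernel.piecewise
    (show MeasurableSet {x : ℝ | z < (x : EReal)} from
      measurable_coe_real_ereal measurableSet_Ioi)
    (P.κ true) (P.κ false)

/-- The transition kernel of the `z⁻`-policy (active iff `x ≥ z`). -/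
def thrKerM (z : EReal) : Kernel ℝ ℝ :=
  haveI : DecidablePred (· ∈ {x : ℝ | z ≤ (x : EReal)}) := Classical.decPred _
  Kernel.piecewise
    (show MeasurableSet {x : ℝ | z ≤ (x : EReal)} from
      measurable_coe_real_ereal measurableSet_Ici)
    (P.κ true) (P.κ false)

/-- The (discounted) state occupation measure `μ_p^z` of the `z`-policy. -/
def occ (z : EReal) (p : Measure ℝ) : Measure ℝ :=
  Measure.sum fun t : ℕ => ENNReal.ofReal (P.β ^ t) • kerIter (P.thrKer z) t p

/-- The (discounted) state occupation measure `μ_p^{z⁻}` of the `z⁻`-policy. -/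
def occM (z : EReal) (p : Measure ℝ) : Measure ℝ :=
  Measure.sum fun t : ℕ => ENNReal.ofReal (P.β ^ t) • kerIter (P.thrKerM z) t p

end Bandit

/-- Finite-horizon reward metric `F_k(x,z)` (value iteration). -/
def Bandit.Fk (P : Bandit) : ℕ → ℝ → EReal → ℝ
  | 0, x, z => P.r x (decide (z < (x : EReal)))
  | (k + 1), x, z =>
      P.r x (decide (z < (x : EReal))) +
        P.β * ∫ y, Bandit.Fk P k y z ∂(P.κ (decide (z < (x : EReal))) x)

/-- Finite-horizon resource metric `G_k(x,z)` (value iteration). -/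
def Bandit.Gk (P : Bandit) : ℕ → ℝ → EReal → ℝ
  | 0, x, z => P.c x (decide (z < (x : EReal)))
  | (k + 1), x, z =>
      P.c x (decide (z < (x : EReal))) +
        P.β * ∫ y, Bandit.Gk P k y z ∂(P.κ (decide (z < (x : EReal))) x)

/-- Finite-horizon marginal reward metric `f_k(x,z)`. -/
def Bandit.fk (P : Bandit) : ℕ → ℝ → EReal → ℝ
  | 0, x, _ => P.r x true - P.r x false
  | (k + 1), x, z =>
      (P.r x true - P.r x false) +
        P.β * ((∫ y, P.Fk k y z ∂(P.κ true x)) - ∫ y, P.Fk k y z ∂(P.κ false x))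

/-- Finite-horizon marginal resource metric `g_k(x,z)`. -/
def Bandit.gk (P : Bandit) : ℕ → ℝ → EReal → ℝ
  | 0, x, _ => P.c x true - P.c x false
  | (k + 1), x, z =>
      (P.c x true - P.c x false) +
        P.β * ((∫ y, P.Gk k y z ∂(P.κ true x)) - ∫ y, P.Gk k y z ∂(P.κ false x))

namespace Bandit

variable (P : Bandit)

/-- Finite-horizon MP metric `m_k(x,z)`. -/
def mk' (k : ℕ) (x : ℝ) (z : EReal) : ℝ := P.fk k x z / P.gk k x z

/-- Finite-horizon MP index `m*_k(x)`. -/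
def mkStar (k : ℕ) (x : ℝ) : ℝ := P.mk' k x (x : EReal)

/-- `g̲(x,z) = inf_k g_k(x,z)`. -/
def gbar (x : ℝ) (z : EReal) : ℝ := ⨅ k : ℕ, P.gk k x z

end Bandit

section JumpAux

lemma ofReal_abs' (t : ℝ) : ENNReal.ofReal |t| = ENNReal.ofReal t + ENNReal.ofReal (-t) := by
  rcases le_total 0 t with h | h
  · rw [abs_of_nonneg h, ENNReal.ofReal_eq_zero.2 (neg_nonpos.2 h), add_zero]
  · rw [abs_of_nonpos h, ENNReal.ofReal_eq_zero.2 h, zero_add]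

lemma my_integral_bind (κ : Kernel ℝ ℝ) [IsSFiniteKernel κ] (μ : Measure ℝ) (f : ℝ → ℝ)
    (hf : Measurable f) (hi : Integrable f (μ.bind fun x => κ x)) :
    ∫ y, f y ∂(μ.bind fun x => κ x) = ∫ x, ∫ y, f y ∂(κ x) ∂μ := by
  have hκm : Measurable fun x : ℝ => (κ x : Measure ℝ) := κ.measurable
  have hpos : Measurable fun y => ENNReal.ofReal (f y) := hf.ennreal_ofReal
  have hneg : Measurable fun y => ENNReal.ofReal (-f y) := hf.neg.ennreal_ofReal
  have hbp := Measure.lintegral_bind (m := μ) hκm.aemeasurable hpos.aemeasurable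
  have hbn := Measure.lintegral_bind (m := μ) hκm.aemeasurable hneg.aemeasurable
  have hfin : ∫⁻ y, ENNReal.ofReal |f y| ∂(μ.bind fun x => κ x) ≠ ⊤ := by
    have h2 := hi.2
    rw [HasFiniteIntegral] at h2
    refine ne_of_lt (lt_of_le_of_lt (le_of_eq (lintegral_congr fun y => ?_)) h2)
    rw [← Real.enorm_eq_ofReal_abs]
  have hsplit : ∀ ν : Measure ℝ, ∫⁻ y, ENNReal.ofReal |f y| ∂ν
      = ∫⁻ y, ENNReal.ofReal (f y) ∂ν + ∫⁻ y, ENNReal.ofReal (-f y) ∂ν := by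
    intro ν
    rw [← lintegral_add_left hpos]
    exact lintegral_congr fun y => ofReal_abs' (f y)
  have hp_fin : ∫⁻ x, ∫⁻ y, ENNReal.ofReal (f y) ∂κ x ∂μ ≠ ⊤ := by
    rw [← hbp]
    intro h
    rw [hsplit, h] at hfin
    exact hfin.symm (by simp)
  have hn_fin : ∫⁻ x, ∫⁻ y, ENNReal.ofReal (-f y) ∂κ x ∂μ ≠ ⊤ := by
    rw [← hbn]
    intro h
    rw [hsplit, h] at hfin
    exact hfin.symm (by simp)
  have hφp : Measurable fun x => ∫⁻ y, ENNReal.ofReal (f y) ∂κ x :=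
    Measurable.lintegral_kernel hpos
  have hφn : Measurable fun x => ∫⁻ y, ENNReal.ofReal (-f y) ∂κ x :=
    Measurable.lintegral_kernel hneg
  have haep := ae_lt_top hφp hp_fin
  have haen := ae_lt_top hφn hn_fin
  rw [integral_eq_lintegral_pos_part_sub_lintegral_neg_part hi, hbp, hbn,
    ← integral_toReal hφp.aemeasurable haep, ← integral_toReal hφn.aemeasurable haen,
    ← integral_sub (integrable_toReal_of_lintegral_ne_top hφp.aemeasurable hp_fin)
      (integrable_toReal_of_lintegral_ne_top hφn.aemeasurable hn_fin)]
  refine integral_congr_ae ?_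
  filter_upwards [haep, haen] with x hxp hxn
  have hix : Integrable f (κ x) := by
    refine ⟨hf.aestronglyMeasurable, ?_⟩
    rw [HasFiniteIntegral]
    calc ∫⁻ y, ‖f y‖ₑ ∂κ x = ∫⁻ y, ENNReal.ofReal |f y| ∂κ x :=
          lintegral_congr fun y => Real.enorm_eq_ofReal_abs _
    _ = _ + _ := hsplit (κ x)
    _ < ⊤ := ENNReal.add_lt_top.2 ⟨hxp, hxn⟩
  rw [integral_eq_lintegral_pos_part_sub_lintegral_neg_part hix]

lemma kerIter_prob (κ : Kernel ℝ ℝ) [IsMarkovKernel κ] (p : Measure ℝ)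
    [IsProbabilityMeasure p] : ∀ t, IsProbabilityMeasure (kerIter κ t p)
  | 0 => by rwa [kerIter]
  | (t + 1) => by
      haveI := kerIter_prob κ p t
      constructor
      show ((kerIter κ t p).bind fun x => κ x) Set.univ = 1
      rw [Measure.bind_apply MeasurableSet.univ κ.measurable.aemeasurable]
      simp

lemma wbdd_integrable {w h : ℝ → ℝ} {C : ℝ} (hh : Measurable h)
    (hb : ∀ y, |h y| ≤ C * w y) {ν : Measure ℝ} (hw : Integrable w ν) :
    Integrable h ν := by
  refine (hw.const_mul C).mono' hh.aestronglyMeasurable ?_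
  filter_upwards with y
  simpa using hb y

lemma core_occ (β γ : ℝ) (hβ0 : 0 ≤ β) (hβγ : β ≤ γ) (hγ1 : γ < 1)
    (w : ℝ → ℝ) (hw_meas : Measurable w) (hw1 : ∀ x, 1 ≤ w x)
    (κ : Kernel ℝ ℝ) [IsMarkovKernel κ]
    (hκw : ∀ x, Integrable w (κ x))
    (hdrift : ∀ x, β * ∫ y, w y ∂(κ x) ≤ γ * w x)
    (D : ℝ → ℝ) (hD : Measurable D) (C : ℝ) (hDb : ∀ x, |D x| ≤ C * w x)
    (c z : ℝ) (heq : ∀ x, D x = (if x = z then -c else 0) + β * ∫ y, D y ∂(κ x))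
    (p : Measure ℝ) (hp : IsProbabilityMeasure p) (hpw : Integrable w p) :
    ∫ x, D x ∂p =
      -(c * ((Measure.sum fun t : ℕ => ENNReal.ofReal (β ^ t) • kerIter κ t p) {z}).toReal) := by
  have hγ0 : 0 ≤ γ := le_trans hβ0 hβγ
  have hβ1 : β < 1 := lt_of_le_of_lt hβγ hγ1
  have hw0 : ∀ x, 0 ≤ w x := fun x => le_trans zero_le_one (hw1 x)
  -- the occupation measure of {z} as a real series
  set μt : ℕ → Measure ℝ := fun t => kerIter κ t p with hμt
  haveI hprob : ∀ t, IsProbabilityMeasure (μt t) := kerIter_prob κ p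
  set S : ℕ → ℝ := fun t => β ^ t * ((μt t) {z}).toReal with hS
  have hS0 : ∀ t, 0 ≤ S t := fun t =>
    mul_nonneg (pow_nonneg hβ0 t) ENNReal.toReal_nonneg
  have hSle : ∀ t, S t ≤ β ^ t := by
    intro t
    have h1 : ((μt t) {z}).toReal ≤ 1 := by
      have hle : (μt t) {z} ≤ 1 := prob_le_one
      simpa using ENNReal.toReal_mono ENNReal.one_ne_top hle
    calc S t ≤ β ^ t * 1 := by
          exact mul_le_mul_of_nonneg_left h1 (pow_nonneg hβ0 t)
    _ = β ^ t := mul_one _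
  have hSsum : Summable S :=
    (summable_geometric_of_lt_one hβ0 hβ1).of_nonneg_of_le hS0 hSle
  have hocc : ((Measure.sum fun t : ℕ => ENNReal.ofReal (β ^ t) • kerIter κ t p) {z}).toReal
      = ∑' t, S t := by
    rw [Measure.sum_apply _ (measurableSet_singleton z)]
    have : ∀ t : ℕ, (ENNReal.ofReal (β ^ t) • kerIter κ t p) {z} = ENNReal.ofReal (S t) := by
      intro t
      rw [Measure.smul_apply, smul_eq_mul, hS]
      rw [ENNReal.ofReal_mul (pow_nonneg hβ0 t), ENNReal.ofReal_toReal (measure_ne_top _ _)]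
    simp_rw [this]
    rw [← ENNReal.ofReal_tsum_of_nonneg hS0 hSsum, ENNReal.toReal_ofReal (tsum_nonneg hS0)]
  rw [hocc]
  -- case β = 0
  rcases eq_or_lt_of_le hβ0 with hβz | hβpos
  · have hDz : ∀ x, D x = (if x = z then -c else 0) := by
      intro x
      rw [heq x, ← hβz, zero_mul, add_zero]
    have h1 : ∑' t, S t = S 0 := by
      refine tsum_eq_single 0 ?_
      intro t ht
      rw [hS]
      simp [← hβz, zero_pow ht]
    rw [h1]
    have h2 : ∫ x, D x ∂p = ∫ x, ({z} : Set ℝ).indicator (fun _ => -c) x ∂p := by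
      refine integral_congr_ae (Filter.Eventually.of_forall fun x => ?_)
      rw [hDz x, Set.indicator_apply]
      simp [Set.mem_singleton_iff]
    rw [h2, integral_indicator_const _ (measurableSet_singleton z)]
    have : (β : ℝ) ^ 0 = 1 := pow_zero β
    simp only [hS, hμt, kerIter, pow_zero, one_mul, smul_eq_mul, measureReal_def]
    ring
  -- case β > 0
  · have hC0 : 0 ≤ C := by nlinarith [hw1 0, abs_nonneg (D 0), hDb 0]
    have hμ0 : μt 0 = p := rfl
    have hwm : Measurable fun y => ENNReal.ofReal (w y) := hw_meas.ennreal_ofReal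
    have hld : ∀ x, ENNReal.ofReal β * ∫⁻ y, ENNReal.ofReal (w y) ∂κ x
        ≤ ENNReal.ofReal γ * ENNReal.ofReal (w x) := by
      intro x
      rw [← ofReal_integral_eq_lintegral_ofReal (hκw x) (Filter.Eventually.of_forall hw0),
        ← ENNReal.ofReal_mul hβ0, ← ENNReal.ofReal_mul hγ0]
      exact ENNReal.ofReal_le_ofReal (hdrift x)
    set W : ℕ → ENNReal := fun t => ∫⁻ y, ENNReal.ofReal (w y) ∂(μt t) with hW
    have hWA : ∀ t, ENNReal.ofReal (β ^ t) * W t ≤ ENNReal.ofReal (γ ^ t) * W 0 := by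
      intro t
      induction t with
      | zero => simp
      | succ t ih =>
        have hbind : W (t + 1) = ∫⁻ x, ∫⁻ y, ENNReal.ofReal (w y) ∂κ x ∂(μt t) :=
          Measure.lintegral_bind (m := μt t) κ.measurable.aemeasurable hwm.aemeasurable
        calc ENNReal.ofReal (β ^ (t + 1)) * W (t + 1)
            = ENNReal.ofReal (β ^ t) *
              ∫⁻ x, ENNReal.ofReal β * ∫⁻ y, ENNReal.ofReal (w y) ∂κ x ∂(μt t) := by
              rw [hbind, lintegral_const_mul' _ _ ENNReal.ofReal_ne_top, pow_succ,
                ENNReal.ofReal_mul (pow_nonneg hβ0 t), mul_assoc]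
          _ ≤ ENNReal.ofReal (β ^ t) *
              ∫⁻ x, ENNReal.ofReal γ * ENNReal.ofReal (w x) ∂(μt t) :=
              mul_le_mul' le_rfl (lintegral_mono fun x => hld x)
          _ = ENNReal.ofReal γ * (ENNReal.ofReal (β ^ t) * W t) := by
              rw [lintegral_const_mul' _ _ ENNReal.ofReal_ne_top, hW]; ring
          _ ≤ ENNReal.ofReal γ * (ENNReal.ofReal (γ ^ t) * W 0) := mul_le_mul' le_rfl ih
          _ = ENNReal.ofReal (γ ^ (t + 1)) * W 0 := by
              rw [pow_succ, ENNReal.ofReal_mul (pow_nonneg hγ0 t)]; ring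
    have hW0 : W 0 = ENNReal.ofReal (∫ x, w x ∂p) := by
      rw [hW]
      simp only [hμ0]
      exact (ofReal_integral_eq_lintegral_ofReal hpw (Filter.Eventually.of_forall hw0)).symm
    have hWfin : ∀ t, W t ≠ ⊤ := by
      intro t h
      have h1 := hWA t
      have hb0 : ENNReal.ofReal (β ^ t) ≠ 0 := by
        simp only [ne_eq, ENNReal.ofReal_eq_zero, not_le]
        exact pow_pos hβpos t
      rw [h, ENNReal.mul_top hb0] at h1
      have h2 : ENNReal.ofReal (γ ^ t) * W 0 < ⊤ := by
        rw [hW0]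
        exact ENNReal.mul_lt_top ENNReal.ofReal_lt_top ENNReal.ofReal_lt_top
      exact absurd h1 (by simp [h2.ne])
    have hIw : ∀ t, Integrable w (μt t) := by
      intro t
      refine ⟨hw_meas.aestronglyMeasurable, ?_⟩
      rw [HasFiniteIntegral]
      have he : ∀ y : ℝ, ‖w y‖ₑ = ENNReal.ofReal (w y) := by
        intro y
        rw [Real.enorm_eq_ofReal_abs, abs_of_nonneg (hw0 y)]
      simp_rw [he]
      exact lt_top_iff_ne_top.2 (hWfin t)
    have hID : ∀ t, Integrable D (μt t) := fun t => wbdd_integrable hD hDb (hIw t)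
    have hwin : ∀ t, β ^ t * ∫ x, w x ∂(μt t) ≤ γ ^ t * ∫ x, w x ∂p := by
      intro t
      have h1 := hWA t
      rw [hW0] at h1
      have h2 : W t = ENNReal.ofReal (∫ x, w x ∂(μt t)) :=
        (ofReal_integral_eq_lintegral_ofReal (hIw t) (Filter.Eventually.of_forall hw0)).symm
      rw [h2, ← ENNReal.ofReal_mul (pow_nonneg hβ0 t),
        ← ENNReal.ofReal_mul (pow_nonneg hγ0 t)] at h1
      exact (ENNReal.ofReal_le_ofReal_iff
        (mul_nonneg (pow_nonneg hγ0 t) (integral_nonneg hw0))).1 h1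
    have hindeq : (fun x : ℝ => if x = z then -c else 0)
        = ({z} : Set ℝ).indicator fun _ => -c := by
      funext x
      rw [Set.indicator_apply]
      simp [Set.mem_singleton_iff]
    have hstep : ∀ t, ∫ x, D x ∂(μt t)
        = -(c * ((μt t) {z}).toReal) + β * ∫ x, D x ∂(μt (t + 1)) := by
      intro t
      have hind : Integrable (fun x : ℝ => if x = z then -c else 0) (μt t) := by
        rw [hindeq]
        exact (integrable_const (-c)).indicator (measurableSet_singleton z)
      have hsub : ∫ x, (D x - (if x = z then -c else 0)) ∂(μt t)
          = ∫ x, D x ∂(μt t) - ∫ x, (if x = z then -c else 0) ∂(μt t) :=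
        integral_sub (hID t) hind
      have hμsucc : μt (t + 1) = (μt t).bind fun x => κ x := rfl
      have hIDsucc : Integrable D ((μt t).bind fun x => κ x) := by
        rw [← hμsucc]; exact hID (t + 1)
      have hbindI : ∫ x, (D x - (if x = z then -c else 0)) ∂(μt t)
          = β * ∫ x, D x ∂(μt (t + 1)) := by
        have h1 : ∀ x : ℝ, D x - (if x = z then -c else 0) = β * ∫ y, D y ∂κ x := by
          intro x
          rw [heq x]; ring
        rw [integral_congr_ae (Filter.Eventually.of_forall h1), integral_const_mul,
          hμsucc, ← my_integral_bind κ (μt t) D hD hIDsucc]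
      have hindint : ∫ x, (if x = z then -c else 0) ∂(μt t) = -(c * ((μt t) {z}).toReal) := by
        rw [hindeq, integral_indicator_const (-c) (measurableSet_singleton z), smul_eq_mul, measureReal_def]
        ring
      rw [hsub, hindint] at hbindI
      linarith [hbindI]
    have hpartial : ∀ n, ∫ x, D x ∂p
        = -(c * ∑ t ∈ Finset.range n, S t) + β ^ n * ∫ x, D x ∂(μt n) := by
      intro n
      induction n with
      | zero => simp [hμ0]
      | succ n ih =>
        rw [ih, hstep n, Finset.sum_range_succ, hS]
        ring
    have hbd : ∀ n : ℕ, ‖β ^ n * ∫ x, D x ∂(μt n)‖ ≤ C * (∫ x, w x ∂p) * γ ^ n := by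
      intro n
      rw [Real.norm_eq_abs, abs_mul, abs_of_nonneg (pow_nonneg hβ0 n)]
      have h1 : |∫ x, D x ∂(μt n)| ≤ C * ∫ x, w x ∂(μt n) := by
        rw [← Real.norm_eq_abs]
        calc ‖∫ x, D x ∂(μt n)‖ ≤ ∫ x, ‖D x‖ ∂(μt n) := norm_integral_le_integral_norm _
        _ ≤ ∫ x, C * w x ∂(μt n) := by
            refine integral_mono (hID n).norm ((hIw n).const_mul C) fun x => ?_
            rw [Real.norm_eq_abs]
            exact hDb x
        _ = C * ∫ x, w x ∂(μt n) := integral_const_mul C w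
      calc β ^ n * |∫ x, D x ∂(μt n)| ≤ β ^ n * (C * ∫ x, w x ∂(μt n)) :=
            mul_le_mul_of_nonneg_left h1 (pow_nonneg hβ0 n)
      _ = C * (β ^ n * ∫ x, w x ∂(μt n)) := by ring
      _ ≤ C * (γ ^ n * ∫ x, w x ∂p) := mul_le_mul_of_nonneg_left (hwin n) hC0
      _ = C * (∫ x, w x ∂p) * γ ^ n := by ring
    have hlim1 : Tendsto (fun n => β ^ n * ∫ x, D x ∂(μt n)) atTop (nhds 0) := by
      refine squeeze_zero_norm hbd ?_
      have := (tendsto_pow_atTop_nhds_zero_of_lt_one hγ0 hγ1).const_mul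
        (C * ∫ x, w x ∂p)
      simpa using this
    have hlim2 : Tendsto (fun n => -(c * ∑ t ∈ Finset.range n, S t)
        + β ^ n * ∫ x, D x ∂(μt n)) atTop (nhds (-(c * ∑' t, S t) + 0)) :=
      Tendsto.add ((hSsum.hasSum.tendsto_sum_nat.const_mul c).neg) hlim1
    have hconst : Tendsto (fun _ : ℕ => ∫ x, D x ∂p) atTop (nhds (-(c * ∑' t, S t) + 0)) :=
      hlim2.congr fun n => (hpartial n).symm
    have hfin := tendsto_nhds_unique hconst tendsto_const_nhds
    rw [add_zero] at hfin
    exact hfin.symm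


lemma Bandit.thrKer_apply (P : Bandit) (z : EReal) (x : ℝ) :
    P.thrKer z x = if z < (x : EReal) then P.κ true x else P.κ false x := by
  rw [Bandit.thrKer, @Kernel.piecewise_apply _ _ _ _ _ _ _ _ (Classical.decPred _) x]
  by_cases h : z < (x : EReal)
  · rw [if_pos (show x ∈ {x : ℝ | z < (x : EReal)} from h), if_pos h]
  · rw [if_neg (show x ∉ {x : ℝ | z < (x : EReal)} from h), if_neg h]

lemma Bandit.thrKerM_apply (P : Bandit) (z : EReal) (x : ℝ) :
    P.thrKerM z x = if z ≤ (x : EReal) then P.κ true x else P.κ false x := by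
  rw [Bandit.thrKerM, @Kernel.piecewise_apply _ _ _ _ _ _ _ _ (Classical.decPred _) x]
  by_cases h : z ≤ (x : EReal)
  · rw [if_pos (show x ∈ {x : ℝ | z ≤ (x : EReal)} from h), if_pos h]
  · rw [if_neg (show x ∉ {x : ℝ | z ≤ (x : EReal)} from h), if_neg h]

lemma Bandit.thrKer_markov (P : Bandit) (z : EReal) : IsMarkovKernel (P.thrKer z) := by
  constructor
  intro x
  rw [P.thrKer_apply z x]
  split_ifs
  · exact (P.hκ true).isProbabilityMeasure x
  · exact (P.hκ false).isProbabilityMeasure x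

lemma Bandit.thrKerM_markov (P : Bandit) (z : EReal) : IsMarkovKernel (P.thrKerM z) := by
  constructor
  intro x
  rw [P.thrKerM_apply z x]
  split_ifs
  · exact (P.hκ true).isProbabilityMeasure x
  · exact (P.hκ false).isProbabilityMeasure x

lemma Bandit.thrKer_int (P : Bandit) (z : EReal) (x : ℝ) :
    Integrable P.w (P.thrKer z x) := by
  rw [P.thrKer_apply z x]; split_ifs
  · exact P.hw_int true x
  · exact P.hw_int false x

lemma Bandit.thrKerM_int (P : Bandit) (z : EReal) (x : ℝ) :
    Integrable P.w (P.thrKerM z x) := by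
  rw [P.thrKerM_apply z x]; split_ifs
  · exact P.hw_int true x
  · exact P.hw_int false x

lemma Bandit.thrKer_drift (P : Bandit) (z : EReal) (x : ℝ) :
    P.β * ∫ y, P.w y ∂(P.thrKer z x) ≤ P.γ * P.w x := by
  rw [P.thrKer_apply z x]; split_ifs
  · exact P.hw_drift true x
  · exact P.hw_drift false x

lemma Bandit.thrKerM_drift (P : Bandit) (z : EReal) (x : ℝ) :
    P.β * ∫ y, P.w y ∂(P.thrKerM z x) ≤ P.γ * P.w x := by
  rw [P.thrKerM_apply z x]; split_ifs
  · exact P.hw_drift true x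
  · exact P.hw_drift false x

lemma jump_aux (P : Bandit) (p : Measure ℝ) (hp : P.IsInitDist p) (z : ℝ)
    (R : ℝ → Bool → ℝ)
    (u v : ℝ → ℝ) (hu : Measurable u) (hv : Measurable v)
    (Cu : ℝ) (hub : ∀ x, |u x| ≤ Cu * P.w x) (Cv : ℝ) (hvb : ∀ x, |v x| ≤ Cv * P.w x)
    (hueq : ∀ x, u x = R x (decide ((z : EReal) < (x : EReal))) +
      P.β * ∫ y, u y ∂(P.κ (decide ((z : EReal) < (x : EReal))) x))
    (hveq : ∀ x, v x = R x (decide ((z : EReal) ≤ (x : EReal))) +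
      P.β * ∫ y, v y ∂(P.κ (decide ((z : EReal) ≤ (x : EReal))) x)) :
    (∫ x, u x ∂p - ∫ x, v x ∂p
      = -(((R z true - R z false) +
          P.β * ((∫ y, v y ∂(P.κ true z)) - ∫ y, v y ∂(P.κ false z))) *
          (P.occ z p {z}).toReal)) ∧
    (∫ x, u x ∂p - ∫ x, v x ∂p
      = -(((R z true - R z false) +
          P.β * ((∫ y, u y ∂(P.κ true z)) - ∫ y, u y ∂(P.κ false z))) *
          (P.occM z p {z}).toReal)) := by
  obtain ⟨hp1, hp2⟩ := hp
  haveI := P.hκ true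
  haveI := P.hκ false
  haveI := P.thrKer_markov (z : EReal)
  haveI := P.thrKerM_markov (z : EReal)
  set D : ℝ → ℝ := fun x => u x - v x with hD
  have hDm : Measurable D := hu.sub hv
  have hDb : ∀ x, |D x| ≤ (Cu + Cv) * P.w x := by
    intro x
    calc |u x - v x| ≤ |u x| + |v x| := abs_sub _ _
    _ ≤ Cu * P.w x + Cv * P.w x := add_le_add (hub x) (hvb x)
    _ = (Cu + Cv) * P.w x := by ring
  have hIu : ∀ a x, Integrable u (P.κ a x) :=
    fun a x => wbdd_integrable hu hub (P.hw_int a x)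
  have hIv : ∀ a x, Integrable v (P.κ a x) :=
    fun a x => wbdd_integrable hv hvb (P.hw_int a x)
  have hsub : ∀ a (x : ℝ), ∫ y, D y ∂(P.κ a x) = (∫ y, u y ∂(P.κ a x)) - ∫ y, v y ∂(P.κ a x) :=
    fun a x => integral_sub (hIu a x) (hIv a x)
  -- decide facts
  have hdzz : decide ((z : EReal) < (z : EReal)) = false := decide_eq_false (lt_irrefl _)
  have hdzz' : decide ((z : EReal) ≤ (z : EReal)) = true := decide_eq_true le_rfl
  -- the two fixed point equations for D
  have heq1 : ∀ x, D x = (if x = z then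
      -((R z true - R z false) +
        P.β * ((∫ y, v y ∂(P.κ true z)) - ∫ y, v y ∂(P.κ false z))) else 0) +
      P.β * ∫ y, D y ∂(P.thrKer z x) := by
    intro x
    by_cases hx : x = z
    · subst hx
      rw [if_pos rfl, P.thrKer_apply, if_neg (lt_irrefl _), hsub false x]
      have h1 := hueq x
      have h2 := hveq x
      rw [hdzz] at h1
      rw [hdzz'] at h2
      rw [hD]
      simp only []
      rw [h1, h2]
      ring
    · rw [if_neg hx, P.thrKer_apply]
      by_cases hlt : (z : EReal) < (x : EReal)
      · rw [if_pos hlt, hsub true x]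
        have h1 := hueq x
        have h2 := hveq x
        rw [decide_eq_true hlt] at h1
        rw [decide_eq_true (le_of_lt hlt)] at h2
        rw [hD]; simp only []; rw [h1, h2]; ring
      · have hle : ¬((z : EReal) ≤ (x : EReal)) := by
          intro h
          exact hx (by exact_mod_cast le_antisymm (not_lt.1 hlt) h)
        rw [if_neg hlt, hsub false x]
        have h1 := hueq x
        have h2 := hveq x
        rw [decide_eq_false hlt] at h1
        rw [decide_eq_false hle] at h2
        rw [hD]; simp only []; rw [h1, h2]; ring
  have heq2 : ∀ x, D x = (if x = z then
      -((R z true - R z false) +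
        P.β * ((∫ y, u y ∂(P.κ true z)) - ∫ y, u y ∂(P.κ false z))) else 0) +
      P.β * ∫ y, D y ∂(P.thrKerM z x) := by
    intro x
    by_cases hx : x = z
    · subst hx
      rw [if_pos rfl, P.thrKerM_apply, if_pos le_rfl, hsub true x]
      have h1 := hueq x
      have h2 := hveq x
      rw [hdzz] at h1
      rw [hdzz'] at h2
      rw [hD]; simp only []; rw [h1, h2]; ring
    · rw [if_neg hx, P.thrKerM_apply]
      by_cases hlt : (z : EReal) < (x : EReal)
      · rw [if_pos (le_of_lt hlt), hsub true x]
        have h1 := hueq x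
        have h2 := hveq x
        rw [decide_eq_true hlt] at h1
        rw [decide_eq_true (le_of_lt hlt)] at h2
        rw [hD]; simp only []; rw [h1, h2]; ring
      · have hle : ¬((z : EReal) ≤ (x : EReal)) := by
          intro h
          exact hx (by exact_mod_cast le_antisymm (not_lt.1 hlt) h)
        rw [if_neg hle, hsub false x]
        have h1 := hueq x
        have h2 := hveq x
        rw [decide_eq_false hlt] at h1
        rw [decide_eq_false hle] at h2
        rw [hD]; simp only []; rw [h1, h2]; ring
  have hintp : ∫ x, D x ∂p = ∫ x, u x ∂p - ∫ x, v x ∂p :=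
    integral_sub (wbdd_integrable hu hub hp2) (wbdd_integrable hv hvb hp2)
  constructor
  · rw [← hintp]
    exact core_occ P.β P.γ P.hβ0 P.hβγ P.hγ1 P.w P.hw_meas P.hw_one (P.thrKer z)
      (P.thrKer_int z) (P.thrKer_drift z) D hDm (Cu + Cv) hDb _ z heq1 p hp1 hp2
  · rw [← hintp]
    exact core_occ P.β P.γ P.hβ0 P.hβγ P.hγ1 P.w P.hw_meas P.hw_one (P.thrKerM z)
      (P.thrKerM_int z) (P.thrKerM_drift z) D hDm (Cu + Cv) hDb _ z heq2 p hp1 hp2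

end JumpAux

/-- Jump formulae: `F(p,z) − F(p,z⁻) = −f(z,z⁻)·μ_p^z{z} = −f(z,z)·μ_p^{z⁻}{z}`
and similarly for `G` and `g`. -/
theorem jump_formulae (P : Bandit) (p : Measure ℝ) (hp : P.IsInitDist p)
    (z : ℝ) :
    (P.Fp p z - P.Fmp p z = -(P.fm z z * (P.occ z p {z}).toReal) ∧
      P.Fp p z - P.Fmp p z = -(P.f z z * (P.occM z p {z}).toReal)) ∧
    (P.Gp p z - P.Gmp p z = -(P.gm z z * (P.occ z p {z}).toReal) ∧
      P.Gp p z - P.Gmp p z = -(P.g z z * (P.occM z p {z}).toReal)) := by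
  obtain ⟨CF, hCF⟩ := P.hF_bdd z
  obtain ⟨CFm, hCFm⟩ := P.hFm_bdd z
  obtain ⟨CG, hCG⟩ := P.hG_bdd z
  obtain ⟨CGm, hCGm⟩ := P.hGm_bdd z
  have hF := jump_aux P p hp z P.r (fun x => P.F x z) (fun x => P.Fm x z)
    (P.hF_meas z) (P.hFm_meas z) CF hCF CFm hCFm
    (fun x => P.hF_eq x z) (fun x => P.hFm_eq x z)
  have hG := jump_aux P p hp z P.c (fun x => P.G x z) (fun x => P.Gm x z)
    (P.hG_meas z) (P.hGm_meas z) CG hCG CGm hCGm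
    (fun x => P.hG_eq x z) (fun x => P.hGm_eq x z)
  exact ⟨⟨hF.1, hF.2⟩, ⟨hG.1, hG.2⟩⟩
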